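/- The Suwa–Todo flow v_{ij} = max(0, min(Δ_{ij}, w_i + w_j − Δ_{ij}, w_i, w_j)) satisfies the total balance condition Σ_{i=1}^n v_{ij} = w_j for every j. -/

import Mathlib

open Finset

/-- Partial sums `S i = w 1 + ... + w i`, with the convention `S 0 = S n`. -/
noncomputable def stS (n : ℕ) (w : ℕ → ℝ) (i : ℕ) : ℝ :=
  if i = 0 then ∑ k ∈ Finset.Icc 1 n, w k else ∑ k ∈ Finset.Icc 1 i, w k

/-- `Δ i j = S i - S (j-1) + w 1`. -/
noncomputable def stDelta (n : ℕ) (w : ℕ → ℝ) (i j : ℕ) : ℝ :=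
  stS n w i - stS n w (j - 1) + w 1

/-- The Suwa–Todo flow
`v i j = max (0, min (Δ i j, w i + w j - Δ i j, w i, w j))`. -/
noncomputable def stFlow (n : ℕ) (w : ℕ → ℝ) (i j : ℕ) : ℝ :=
  max 0 (min (stDelta n w i j) (min (w i + w j - stDelta n w i j) (min (w i) (w j))))

set_option maxHeartbeats 2000000 in
/-- Length of the intersection of `[x,y]` with `[a,b]` as a difference of clamps. -/
lemma clamp_diff (a b x y : ℝ) (hab : a ≤ b) (hxy : x ≤ y) :
    max 0 (min (y - a) (min (b - x) (min (y - x) (b - a))))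
      = min b (max a y) - min b (max a x) := by
  rcases le_total y a with h1 | h1 <;> rcases le_total b x with h2 | h2 <;>
    rcases le_total x a with h3 | h3 <;> rcases le_total y b with h4 | h4 <;>
    simp only [max_def, min_def] <;> split_ifs <;> linarith

/-- The Suwa–Todo flow satisfies the total balance condition (column sums). -/
theorem suwa_todo_col_sums (n : ℕ) (hn : 2 ≤ n) (w : ℕ → ℝ)
    (hw : ∀ k ∈ Finset.Icc 1 n, 0 < w k)
    (hmax : ∀ k ∈ Finset.Icc 1 n, w k ≤ w 1) :
    ∀ j ∈ Finset.Icc 1 n, ∑ i ∈ Finset.Icc 1 n, stFlow n w i j = w j := by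
  intro j hj
  simp only [Finset.mem_Icc] at hj
  set s : ℕ → ℝ := fun i => ∑ k ∈ Finset.Icc 1 i, w k with hs
  have hs0 : s 0 = 0 := by simp [hs]
  have hs1 : s 1 = w 1 := by simp [hs]
  have hssucc : ∀ i : ℕ, s (i + 1) = s i + w (i + 1) := by
    intro i
    simpa [hs] using Finset.sum_Icc_succ_top (by omega : 1 ≤ i + 1) w
  have hmono : ∀ i i' : ℕ, i ≤ i' → i' ≤ n → s i ≤ s i' := by
    intro i i' h h'
    apply Finset.sum_le_sum_of_subset_of_nonneg
    · exact Finset.Icc_subset_Icc_right h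
    · intro k hk _
      exact le_of_lt (hw k (Finset.mem_Icc.mpr ⟨(Finset.mem_Icc.mp hk).1,
        le_trans (Finset.mem_Icc.mp hk).2 h'⟩))
  set a : ℝ := stS n w (j - 1) - w 1 with ha
  have hwj : 0 < w j := hw j (Finset.mem_Icc.mpr hj)
  have hw1 : 0 < w 1 := hw 1 (Finset.mem_Icc.mpr ⟨le_rfl, by omega⟩)
  -- bounds for a
  have hbounds : 0 ≤ a ∧ a + w j ≤ s n := by
    rcases Nat.eq_or_lt_of_le hj.1 with h1 | h1
    · -- j = 1
      have hj0 : j - 1 = 0 := by omega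
      have hSval : stS n w (j - 1) = s n := by rw [hj0]; simp [stS, hs]
      have h1n : s 1 ≤ s n := hmono 1 n (by omega) le_rfl
      have hwj1 : w j = w 1 := by rw [← h1]
      constructor <;> (rw [ha, hSval]; linarith)
    · -- j ≥ 2
      have hj1 : j - 1 ≠ 0 := by omega
      have hSval : stS n w (j - 1) = s (j - 1) := by simp [stS, hj1, hs]
      have hjeq : j - 1 + 1 = j := by omega
      have hsj : s j = s (j - 1) + w j := by rw [← hjeq]; exact hssucc (j - 1)
      have hjn : s j ≤ s n := hmono j n hj.2 le_rfl
      have h1j : s 1 ≤ s (j - 1) := hmono 1 (j - 1) (by omega) (by omega)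
      constructor <;> (rw [ha, hSval]; linarith)
  obtain ⟨hA0, hBn⟩ := hbounds
  have haa : a ≤ a + w j := by linarith
  have han : a ≤ s n := le_trans haa hBn
  -- pointwise identity
  have key : ∀ i ∈ Finset.Icc 1 n, stFlow n w i j =
      min (a + w j) (max a (s i)) - min (a + w j) (max a (s (i - 1))) := by
    intro i hi
    simp only [Finset.mem_Icc] at hi
    have hi0 : i ≠ 0 := by omega
    have hieq : i - 1 + 1 = i := by omega
    have hsi : s i = s (i - 1) + w i := by rw [← hieq]; exact hssucc (i - 1)
    have hwi : 0 < w i := hw i (Finset.mem_Icc.mpr hi)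
    have hxy : s (i - 1) ≤ s i := by linarith
    have hΔ : stDelta n w i j = s i - a := by
      rw [stDelta, ha]
      simp only [stS, if_neg hi0, hs]
      ring
    have h := clamp_diff a (a + w j) (s (i - 1)) (s i) haa hxy
    rw [show a + w j - a = w j from by ring] at h
    rw [show a + w j - s (i - 1) = w i + w j - (s i - a) from by rw [hsi]; ring] at h
    rw [show s i - s (i - 1) = w i from by linarith] at h
    rw [stFlow, hΔ]
    exact h
  rw [Finset.sum_congr rfl key]
  -- telescope
  have htel : ∑ i ∈ Finset.Icc 1 n,
      (min (a + w j) (max a (s i)) - min (a + w j) (max a (s (i - 1))))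
      = min (a + w j) (max a (s n)) - min (a + w j) (max a (s 0)) := by
    rw [show Finset.Icc 1 n = Finset.Ico 1 (n + 1) from by rw [Finset.Ico_add_one_right_eq_Icc],
      Finset.sum_Ico_eq_sum_range]
    have hcg : ∀ i ∈ Finset.range (n + 1 - 1),
        min (a + w j) (max a (s (1 + i))) - min (a + w j) (max a (s (1 + i - 1)))
        = min (a + w j) (max a (s (i + 1))) - min (a + w j) (max a (s i)) := by
      intro i _
      rw [show 1 + i = i + 1 from by omega, show i + 1 - 1 = i from by omega]
    rw [Finset.sum_congr rfl hcg]
    have hr : n + 1 - 1 = n := by omega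
    rw [hr]
    exact Finset.sum_range_sub (fun i => min (a + w j) (max a (s i))) n
  rw [htel, hs0]
  rw [max_eq_left hA0, min_eq_right haa, max_eq_right han, min_eq_left hBn]
  ring
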